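/- Let b > 0 be real and set a = b in the standard rectangle setup, so that σ(x,y) = (b−x, y) and τ(x,y) = (b−y, b−x). Let K = {(x,y) ∈ [0,b]² : (y ≤ x and y ≤ b−x) or (y ≥ x and y ≥ b−x)} (the union of the bottom and top triangles cut out by the two diagonals of the square A = [0,b]²). Then K is compact, K ∪ τ(K) = A, K ∩ τ(K) has Lebesgue measure zero, and σ(K) = K. -/

import Mathlib

open MeasureTheory

/-- The square `A = [0,b] × [0,b]` of the standard rectangle setup. -/
def sqA (b : ℝ) : Set (ℝ × ℝ) := Set.Icc 0 b ×ˢ Set.Icc 0 b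

/-- The rectangle `B = [b−a, 0] × [0,b]` of the standard rectangle setup. -/
def recB (a b : ℝ) : Set (ℝ × ℝ) := Set.Icc (b - a) 0 ×ˢ Set.Icc 0 b

/-- `τ(x,y) = (b−y, b−x)`, the reflection in the line `x + y = b`. -/
def tauMap (b : ℝ) : ℝ × ℝ → ℝ × ℝ := fun p => (b - p.2, b - p.1)

/-- `ρ(x,y) = (b−a−x, b−y)`, the half-turn about the center of `B`. -/
def rhoMap (a b : ℝ) : ℝ × ℝ → ℝ × ℝ := fun p => (b - a - p.1, b - p.2)

/-- `σ(x,y) = (2b−a−x, y)`, the reflection in the vertical bisector of `A ∪ B`. -/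
def sigmaMap (a b : ℝ) : ℝ × ℝ → ℝ × ℝ := fun p => (2 * b - a - p.1, p.2)

/-- Compact sets `K ⊆ A` and `L ⊆ B` satisfying conditions Rh1–Rh3 of the standard
rectangle setup: (Rh1) `K ∪ τ(K) = A` with `K ∩ τ(K)` of measure zero;
(Rh2) `L ∪ ρ(L) = B` with `L ∩ ρ(L)` of measure zero; (Rh3) `σ(K ∪ L) = K ∪ L`. -/
def RhKL (a b : ℝ) (K L : Set (ℝ × ℝ)) : Prop :=
  IsCompact K ∧ IsCompact L ∧ K ⊆ sqA b ∧ L ⊆ recB a b ∧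
  K ∪ tauMap b '' K = sqA b ∧ volume (K ∩ tauMap b '' K) = 0 ∧
  L ∪ rhoMap a b '' L = recB a b ∧ volume (L ∩ rhoMap a b '' L) = 0 ∧
  sigmaMap a b '' (K ∪ L) = K ∪ L

lemma graph_null (f : ℝ → ℝ) (hf : Measurable f) :
    volume {p : ℝ × ℝ | p.2 = f p.1} = 0 := by
  have hm : MeasurableSet {p : ℝ × ℝ | p.2 = f p.1} := by
    have : {p : ℝ × ℝ | p.2 = f p.1} = {p : ℝ × ℝ | p.2 - f p.1 = 0} := by
      ext p; simp [sub_eq_zero]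
    rw [this]
    exact (measurable_snd.sub (hf.comp measurable_fst)) (measurableSet_singleton 0)
  rw [Measure.volume_eq_prod]
  rw [Measure.prod_apply hm]
  simp only [Set.preimage_setOf_eq]
  have : ∀ x : ℝ, volume {y : ℝ | y = f x} = 0 := by
    intro x
    have : {y : ℝ | y = f x} = {f x} := by ext; simp
    rw [this]; exact measure_singleton _
  simp [this]

/-- For `b > 0` and `a = b`, the union `K` of the bottom and top
triangles cut out of the square `A = [0,b]²` by its two diagonals is compact, satisfies
`K ∪ τ(K) = A` with `K ∩ τ(K)` of Lebesgue measure zero, and `σ(K) = K`. -/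
theorem stmt_8 (b : ℝ) (hb : 0 < b)
    (K : Set (ℝ × ℝ))
    (hK : K = {p ∈ sqA b | (p.2 ≤ p.1 ∧ p.2 ≤ b - p.1) ∨ (p.1 ≤ p.2 ∧ b - p.1 ≤ p.2)}) :
    IsCompact K ∧ K ∪ tauMap b '' K = sqA b ∧ volume (K ∩ tauMap b '' K) = 0 ∧
      sigmaMap b b '' K = K := by
  have htau : ∀ p : ℝ × ℝ, tauMap b (tauMap b p) = p := by
    intro p; simp [tauMap]
  have himg : tauMap b '' K = tauMap b ⁻¹' K := by
    ext p
    constructor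
    · rintro ⟨q, hq, rfl⟩; simpa [Set.mem_preimage, htau q] using hq
    · intro h; exact ⟨tauMap b p, h, htau p⟩
  have hmemA : ∀ p : ℝ × ℝ, p ∈ sqA b ↔ (0 ≤ p.1 ∧ p.1 ≤ b) ∧ 0 ≤ p.2 ∧ p.2 ≤ b := by
    intro p; simp [sqA, Set.mem_prod, Set.mem_Icc, Prod.le_def]; tauto
  refine ⟨?_, ?_, ?_, ?_⟩
  · -- compactness
    have : K = sqA b ∩ ({p : ℝ × ℝ | p.2 ≤ p.1 ∧ p.2 ≤ b - p.1}
        ∪ {p : ℝ × ℝ | p.1 ≤ p.2 ∧ b - p.1 ≤ p.2}) := by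
      rw [hK]; ext p; simp [Set.mem_sep_iff]; tauto
    rw [this]
    have hA : IsCompact (sqA b) := (isCompact_Icc.prod isCompact_Icc)
    refine hA.inter_right ?_
    refine IsClosed.union ?_ ?_
    · exact (isClosed_le continuous_snd continuous_fst).inter
        (isClosed_le continuous_snd (continuous_const.sub continuous_fst))
    · exact (isClosed_le continuous_fst continuous_snd).inter
        (isClosed_le (continuous_const.sub continuous_fst) continuous_snd)
  · -- union
    rw [himg]
    apply Set.eq_of_subset_of_subset
    · rintro p (hp | hp)
      · rw [hK] at hp; exact hp.1
      · rw [hK] at hp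
        have h1 := hp.1
        rw [hmemA] at h1 ⊢
        simp only [tauMap] at h1
        constructor <;> constructor <;> linarith [h1.1.1, h1.1.2, h1.2.1, h1.2.2]
    · intro p hp
      have hpA := (hmemA p).1 hp
      rcases le_total p.2 p.1 with h1 | h1 <;> rcases le_total p.2 (b - p.1) with h2 | h2
      · left; rw [hK]; exact ⟨hp, Or.inl ⟨h1, h2⟩⟩
      · right
        rw [Set.mem_preimage, hK]
        refine ⟨?_, Or.inl ⟨by simp [tauMap]; linarith, by simp [tauMap]; linarith⟩⟩
        rw [hmemA]; simp [tauMap]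
        constructor <;> constructor <;> linarith [hpA.1.1, hpA.1.2, hpA.2.1, hpA.2.2]
      · right
        rw [Set.mem_preimage, hK]
        refine ⟨?_, Or.inr ⟨by simp [tauMap]; linarith, by simp [tauMap]; linarith⟩⟩
        rw [hmemA]; simp [tauMap]
        constructor <;> constructor <;> linarith [hpA.1.1, hpA.1.2, hpA.2.1, hpA.2.2]
      · left; rw [hK]; exact ⟨hp, Or.inr ⟨h1, h2⟩⟩
  · -- measure zero
    have hsub : K ∩ tauMap b '' K ⊆
        {p : ℝ × ℝ | p.2 = id p.1} ∪ {p : ℝ × ℝ | p.2 = b - p.1} := by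
      rw [himg]
      rintro p ⟨hp1, hp2⟩
      rw [hK] at hp1
      rw [Set.mem_preimage, hK] at hp2
      have h2 := hp2.2
      simp only [tauMap] at h2
      rcases hp1.2 with ⟨ha, hb'⟩ | ⟨ha, hb'⟩ <;>
        rcases h2 with ⟨hc, hd⟩ | ⟨hc, hd⟩ <;>
        simp only [Set.mem_union, Set.mem_setOf_eq, id] <;>
        [right; left; left; right] <;> linarith
    refine measure_mono_null hsub ?_
    refine le_antisymm (le_trans (measure_union_le _ _) ?_) zero_le
    rw [graph_null id measurable_id, graph_null (fun x => b - x) (by fun_prop)]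
    simp
  · -- sigma
    have hsig : ∀ p : ℝ × ℝ, sigmaMap b b p = (b - p.1, p.2) := by
      intro p; simp [sigmaMap]; ring
    apply Set.eq_of_subset_of_subset
    · rintro p ⟨q, hq, rfl⟩
      rw [hK] at hq ⊢
      rw [hsig]
      have h1 := (hmemA q).1 hq.1
      refine ⟨(hmemA _).2 ?_, ?_⟩
      · simp; constructor <;> constructor <;> linarith [h1.1.1, h1.1.2, h1.2.1, h1.2.2]
      · rcases hq.2 with ⟨ha, hb'⟩ | ⟨ha, hb'⟩
        · left; simp; constructor <;> linarith
        · right; simp; constructor <;> linarith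
    · intro p hp
      refine ⟨sigmaMap b b p, ?_, by rw [hsig, hsig]; simp⟩
      rw [hK] at hp ⊢
      rw [hsig]
      have h1 := (hmemA p).1 hp.1
      refine ⟨(hmemA _).2 ?_, ?_⟩
      · simp; constructor <;> constructor <;> linarith [h1.1.1, h1.1.2, h1.2.1, h1.2.2]
      · rcases hp.2 with ⟨ha, hb'⟩ | ⟨ha, hb'⟩
        · left; simp; constructor <;> linarith
        · right; simp; constructor <;> linarith
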